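/- One has (R⊗R)(c(Δ(α))) = α*⊗α* − qζ·γ⊗γ*, whereas Δ(R(α)) = α*⊗α* − q·γ⊗γ*. Consequently, if q ∉ ℝ (equivalently ζ ≠ 1), then Δ ∘ R ≠ (R⊗R) ∘ c ∘ Δ as maps 𝒜 → 𝒜 ⊗_ℂ 𝒜. -/

import Mathlib

open scoped TensorProduct

noncomputable section

/-- The monomial family `α^n γ^m (γ*)^k` (for `n ≥ 0`) resp. `(α*)^{-n} γ^m (γ*)^k`
(for `n < 0`), indexed by `(n, m, k) ∈ ℤ × ℕ × ℕ`. -/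
def suqMono {A : Type*} [Ring A] [StarRing A] (a g : A) (i : ℤ × ℕ × ℕ) : A :=
  (if 0 ≤ i.1 then a ^ i.1.toNat else (star a) ^ (-i.1).toNat) * g ^ i.2.1 * (star g) ^ i.2.2

/-- The degree-`p` homogeneous component `𝒜_p`: the `ℂ`-span of the basis monomials with
`m - k = p`. -/
def suqHomog {A : Type*} [Ring A] [Algebra ℂ A] [StarRing A] (a g : A) (p : ℤ) :
    Submodule ℂ A :=
  Submodule.span ℂ
    {x | ∃ i : ℤ × ℕ × ℕ, (i.2.1 : ℤ) - (i.2.2 : ℤ) = p ∧ x = suqMono a g i}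

/-- The defining relations of `Pol(SU_q(2))`. -/
def SUqRel {A : Type*} [Ring A] [Algebra ℂ A] [StarRing A] (q : ℂ) (a g : A) : Prop :=
  star a * a + star g * g = 1 ∧
  a * star a + ((‖q‖ : ℂ) ^ 2) • (star g * g) = 1 ∧
  g * star g = star g * g ∧
  a * g = (starRingEnd ℂ q) • (g * a) ∧
  a * star g = q • (star g * a)

/-- The monomials form a `ℂ`-basis. -/
def SUqBasis {A : Type*} [Ring A] [Algebra ℂ A] [StarRing A] (a g : A) : Prop :=
  LinearIndependent ℂ (suqMono a g) ∧
  Submodule.span ℂ (Set.range (suqMono a g)) = ⊤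

/-- The characterizing properties of the antipode `S`. -/
def SUqAntipode {A : Type*} [Ring A] [Algebra ℂ A] [StarRing A] (q : ℂ) (a g : A)
    (S : A →ₗ[ℂ] A) : Prop :=
  S 1 = 1 ∧ S a = star a ∧ S (star a) = a ∧
  S g = (-(starRingEnd ℂ q)) • g ∧ S (star g) = (-q⁻¹) • star g ∧
  (∀ p : ℤ, ∀ x ∈ suqHomog a g p, S x ∈ suqHomog a g p) ∧
  (∀ p r : ℤ, ∀ x ∈ suqHomog a g p, ∀ y ∈ suqHomog a g r,
    S (x * y) = ((q / starRingEnd ℂ q) ^ (-(p * r))) • (S y * S x))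

/-- The braided multiplication on `𝒜 ⊗ 𝒜`. -/
def SUqBraidedMul {A : Type*} [Ring A] [Algebra ℂ A] [StarRing A] (q : ℂ) (a g : A)
    (μ : A ⊗[ℂ] A →ₗ[ℂ] A ⊗[ℂ] A →ₗ[ℂ] A ⊗[ℂ] A) : Prop :=
  ∀ (x w : A) (r s : ℤ), ∀ y ∈ suqHomog a g r, ∀ z ∈ suqHomog a g s,
    μ (x ⊗ₜ[ℂ] y) (z ⊗ₜ[ℂ] w)
      = ((q / starRingEnd ℂ q) ^ (-(r * s))) • ((x * z) ⊗ₜ[ℂ] (y * w))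

/-- The characterizing properties of the comultiplication `Δ` (as a unital algebra
homomorphism into the braided tensor square with multiplication `μ`). -/
def SUqComul {A : Type*} [Ring A] [Algebra ℂ A] [StarRing A] (q : ℂ) (a g : A)
    (μ : A ⊗[ℂ] A →ₗ[ℂ] A ⊗[ℂ] A →ₗ[ℂ] A ⊗[ℂ] A) (Δ : A →ₗ[ℂ] A ⊗[ℂ] A) : Prop :=
  Δ 1 = 1 ⊗ₜ[ℂ] 1 ∧ (∀ x y : A, Δ (x * y) = μ (Δ x) (Δ y)) ∧
  Δ a = a ⊗ₜ[ℂ] a - q • ((star g) ⊗ₜ[ℂ] g) ∧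
  Δ g = g ⊗ₜ[ℂ] a + (star a) ⊗ₜ[ℂ] g ∧
  Δ (star a) = (star a) ⊗ₜ[ℂ] (star a) - q • (g ⊗ₜ[ℂ] (star g)) ∧
  Δ (star g) = (star g) ⊗ₜ[ℂ] (star a) + a ⊗ₜ[ℂ] (star g)

/-- The braided flip `c` on `𝒜 ⊗ 𝒜`. -/
def SUqFlip {A : Type*} [Ring A] [Algebra ℂ A] [StarRing A] (q : ℂ) (a g : A)
    (c : A ⊗[ℂ] A →ₗ[ℂ] A ⊗[ℂ] A) : Prop :=
  ∀ (p r : ℤ), ∀ x ∈ suqHomog a g p, ∀ y ∈ suqHomog a g r,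
    c (x ⊗ₜ[ℂ] y) = ((q / starRingEnd ℂ q) ^ (-(p * r))) • (y ⊗ₜ[ℂ] x)

/-- The Haar functional, defined on the basis. -/
def SUqHaar {A : Type*} [Ring A] [Algebra ℂ A] [StarRing A] (q : ℂ) (a g : A)
    (h : A →ₗ[ℂ] ℂ) : Prop :=
  ∀ i : ℤ × ℕ × ℕ, h (suqMono a g i) =
    if i.1 = 0 ∧ i.2.1 = i.2.2
    then (1 - (‖q‖ : ℂ) ^ 2) / (1 - (‖q‖ : ℂ) ^ (2 * (i.2.1 + 1)))
    else 0

/-- The unitary antipode `R = S ∘ τ_{i/2} ∘ ϑ`, i.e. `R(x) = ζ^{p²/2}·|q|^{-p}·S(x)` for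
`x ∈ 𝒜_p` (principal branch `ζ^z = exp(z·Log ζ)`). -/
def SUqUnitaryAntipode {A : Type*} [Ring A] [Algebra ℂ A] [StarRing A] (q : ℂ) (a g : A)
    (S : A →ₗ[ℂ] A) (R : A →ₗ[ℂ] A) : Prop :=
  ∀ (p : ℤ), ∀ x ∈ suqHomog a g p,
    R x = (Complex.exp (((p : ℂ) ^ 2 / 2) * Complex.log (q / starRingEnd ℂ q)) *
      ((‖q‖ : ℂ) ^ (-p))) • S x

/-- `(R⊗R)(c(Δ(α))) = α*⊗α* − qζ·γ⊗γ*` while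
`Δ(R(α)) = α*⊗α* − q·γ⊗γ*`; hence if `q ∉ ℝ` then `Δ∘R ≠ (R⊗R)∘c∘Δ`. -/
theorem suq_unitary_antipode_comul_fails {A : Type*} [Ring A] [Algebra ℂ A] [StarRing A]
    [StarModule ℂ A]
    (q : ℂ) (hq0 : 0 < ‖q‖) (hq1 : ‖q‖ < 1)
    (a g : A) (hrel : SUqRel q a g) (hbasis : SUqBasis a g)
    (μ : A ⊗[ℂ] A →ₗ[ℂ] A ⊗[ℂ] A →ₗ[ℂ] A ⊗[ℂ] A) (hμ : SUqBraidedMul q a g μ)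
    (Δ : A →ₗ[ℂ] A ⊗[ℂ] A) (hΔ : SUqComul q a g μ Δ)
    (c : A ⊗[ℂ] A →ₗ[ℂ] A ⊗[ℂ] A) (hc : SUqFlip q a g c)
    (S : A →ₗ[ℂ] A) (hS : SUqAntipode q a g S)
    (R : A →ₗ[ℂ] A) (hR : SUqUnitaryAntipode q a g S R) :
    (TensorProduct.map R R) (c (Δ a))
      = (star a) ⊗ₜ[ℂ] (star a) - (q * (q / starRingEnd ℂ q)) • (g ⊗ₜ[ℂ] (star g)) ∧
    Δ (R a) = (star a) ⊗ₜ[ℂ] (star a) - q • (g ⊗ₜ[ℂ] (star g)) ∧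
    (q.im ≠ 0 →
      (fun x : A => Δ (R x)) ≠ (fun x : A => (TensorProduct.map R R) (c (Δ x)))) := by

  classical
  -- basic facts about q and ζ
  have hqne : q ≠ 0 := by
    intro h; rw [h] at hq0; simp at hq0
  have hcqne : (starRingEnd ℂ) q ≠ 0 := by
    simpa using hqne
  set ζ : ℂ := q / starRingEnd ℂ q with hζdef
  have hζne : ζ ≠ 0 := div_ne_zero hqne hcqne
  have habsne : (‖q‖ : ℂ) ≠ 0 := by
    exact_mod_cast hq0.ne'
  -- basis monomials
  have hmono_a : suqMono a g (1, 0, 0) = a := by simp [suqMono]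
  have hmono_as : suqMono a g (-1, 0, 0) = star a := by
    simp [suqMono]
  have hmono_g : suqMono a g (0, 1, 0) = g := by simp [suqMono]
  have hmono_gs : suqMono a g (0, 0, 1) = star g := by simp [suqMono]
  -- homogeneity memberships
  have ha0 : a ∈ suqHomog a g 0 :=
    Submodule.subset_span ⟨(1, 0, 0), by norm_num, hmono_a.symm⟩
  have hg1 : g ∈ suqHomog a g 1 :=
    Submodule.subset_span ⟨(0, 1, 0), by norm_num, hmono_g.symm⟩
  have hgs1 : star g ∈ suqHomog a g (-1) :=
    Submodule.subset_span ⟨(0, 0, 1), by norm_num, hmono_gs.symm⟩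
  -- R on the generators
  have hRa : R a = star a := by
    have := hR 0 a ha0
    simpa [hS.2.1, Complex.exp_zero] using this
  have hRg : R g = (-(Complex.exp ((1 / 2 : ℂ) * Complex.log ζ)
      * (‖q‖ : ℂ)⁻¹ * starRingEnd ℂ q)) • g := by
    have h1 := hR 1 g hg1
    rw [hS.2.2.2.1] at h1
    rw [h1, smul_smul]
    congr 1
    simp only [zpow_neg, zpow_one, one_pow, Int.cast_one]
    ring
  have hRgs : R (star g) = (-(Complex.exp ((1 / 2 : ℂ) * Complex.log ζ)
      * (‖q‖ : ℂ) * q⁻¹)) • (star g) := by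
    have h1 := hR (-1) (star g) hgs1
    rw [hS.2.2.2.2.1] at h1
    rw [h1, smul_smul]
    congr 1
    push_cast
    simp only [neg_neg, zpow_one, neg_one_sq]
    ring
  -- the scalar product of the two γ-scalars is 1
  have hscal : (-(Complex.exp ((1 / 2 : ℂ) * Complex.log ζ)
      * (‖q‖ : ℂ)⁻¹ * starRingEnd ℂ q))
      * (-(Complex.exp ((1 / 2 : ℂ) * Complex.log ζ)
      * (‖q‖ : ℂ) * q⁻¹)) = 1 := by
    have hexp : Complex.exp ((1 / 2 : ℂ) * Complex.log ζ)
        * Complex.exp ((1 / 2 : ℂ) * Complex.log ζ) = ζ := by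
      rw [← Complex.exp_add]
      have : (1 / 2 : ℂ) * Complex.log ζ + (1 / 2 : ℂ) * Complex.log ζ
          = Complex.log ζ := by ring
      rw [this, Complex.exp_log hζne]
    calc (-(Complex.exp ((1 / 2 : ℂ) * Complex.log ζ)
          * (‖q‖ : ℂ)⁻¹ * starRingEnd ℂ q))
          * (-(Complex.exp ((1 / 2 : ℂ) * Complex.log ζ)
          * (‖q‖ : ℂ) * q⁻¹))
        = (Complex.exp ((1 / 2 : ℂ) * Complex.log ζ)
          * Complex.exp ((1 / 2 : ℂ) * Complex.log ζ))
          * ((‖q‖ : ℂ)⁻¹ * (‖q‖ : ℂ))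
          * (starRingEnd ℂ q * q⁻¹) := by ring
      _ = ζ * 1 * (starRingEnd ℂ q * q⁻¹) := by
          rw [hexp, inv_mul_cancel₀ habsne]
      _ = 1 := by rw [hζdef]; field_simp
  -- flip of Δ a
  have hcΔa : c (Δ a) = a ⊗ₜ[ℂ] a - (q * ζ) • (g ⊗ₜ[ℂ] (star g)) := by
    rw [hΔ.2.2.1, map_sub, map_smul]
    rw [hc 0 0 a ha0 a ha0, hc (-1) 1 (star g) hgs1 g hg1]
    simp only [neg_mul, one_mul, neg_neg, mul_zero, neg_zero, zpow_zero, one_smul,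
      zpow_one, smul_smul]
    rfl
  -- first claim
  have claim1 : (TensorProduct.map R R) (c (Δ a))
      = (star a) ⊗ₜ[ℂ] (star a) - (q * ζ) • (g ⊗ₜ[ℂ] (star g)) := by
    rw [hcΔa, map_sub, map_smul, TensorProduct.map_tmul, TensorProduct.map_tmul,
      hRa, hRg, hRgs, TensorProduct.smul_tmul_smul, hscal, one_smul]
  -- second claim
  have claim2 : Δ (R a) = (star a) ⊗ₜ[ℂ] (star a) - q • (g ⊗ₜ[ℂ] (star g)) := by
    rw [hRa, hΔ.2.2.2.2.1]
  refine ⟨claim1, claim2, ?_⟩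
  -- inequality
  intro him heq
  have hBtop : ⊤ ≤ Submodule.span ℂ (Set.range (suqMono a g)) := hbasis.2.ge
  let B : Module.Basis (ℤ × ℕ × ℕ) ℂ A := Module.Basis.mk hbasis.1 hBtop
  have hBg : B (0, 1, 0) = g := by rw [Module.Basis.mk_apply, hmono_g]
  have hBgs : B (0, 0, 1) = star g := by rw [Module.Basis.mk_apply, hmono_gs]
  have hT : g ⊗ₜ[ℂ] (star g) ≠ 0 := by
    have := (Module.Basis.tensorProduct B B).ne_zero ((0, 1, 0), (0, 0, 1))
    rwa [Module.Basis.tensorProduct_apply, hBg, hBgs] at this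
  have hζ1 : ζ ≠ 1 := by
    intro h
    have : q = starRingEnd ℂ q := by
      rw [hζdef, div_eq_one_iff_eq hcqne] at h
      exact h
    exact him (Complex.conj_eq_iff_im.mp this.symm)
  have hcoef : q * ζ - q ≠ 0 := by
    intro h
    apply hζ1
    have : q * (ζ - 1) = 0 := by ring_nf; ring_nf at h; linear_combination h
    rcases mul_eq_zero.mp this with h' | h'
    · exact absurd h' hqne
    · exact sub_eq_zero.mp h'
  have := congrFun heq a
  rw [claim1, claim2] at this
  have h0 : (q * ζ - q) • (g ⊗ₜ[ℂ] (star g)) = 0 := by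
    have h' : q • (g ⊗ₜ[ℂ] (star g)) = (q * ζ) • (g ⊗ₜ[ℂ] (star g)) := by
      have := sub_right_injective this
      exact this
    rw [sub_smul, ← h', sub_self]
  exact (smul_ne_zero hcoef hT) h0
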